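/- arXiv:0704.1588 — 3 statements merged into one kernel-verified Lean document; each statement's English description precedes it below -/
import Mathlib

section
/- Let X be a normal affine irreducible variety over a field k, Ψ an automorphism of X, and α, f ∈ k(X)* such that (Ψ*)^n(f) = α^n · f for every integer n. Then α is an invertible element of the ring of regular functions O(X). -/
open IsDedekindDomain IsLocalRing
open scoped Multiplicative

local notation "ℤₘ₀" => WithZero (Multiplicative ℤ)

noncomputable section ScalingAuxSec

set_option linter.unusedSectionVars false
set_option maxHeartbeats 1600000

variable {R F : Type*} [CommRing R] [IsDomain R] [IsNoetherianRing R] [IsIntegrallyClosed R]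
  [Field F] [Algebra R F] [IsFractionRing R F]

/-- The ideal of denominators of `x : F`. -/
def denomScaling (x : F) : Ideal R where
  carrier := {r : R | ∃ r' : R, algebraMap R F r * x = algebraMap R F r'}
  zero_mem' := ⟨0, by simp⟩
  add_mem' := by
    rintro a b ⟨a', ha⟩ ⟨b', hb⟩
    exact ⟨a' + b', by rw [map_add, add_mul, ha, hb, map_add]⟩
  smul_mem' := by
    rintro c r ⟨r', hr⟩
    exact ⟨c * r', by rw [smul_eq_mul, map_mul, map_mul, mul_assoc, hr]⟩

lemma mem_denomScaling {x : F} {r : R} :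
    r ∈ denomScaling (R := R) x ↔ ∃ r' : R, algebraMap R F r * x = algebraMap R F r' := Iff.rfl

lemma notMem_range_iff_denomScaling {x : F} :
    x ∉ (algebraMap R F).range ↔ (1 : R) ∉ denomScaling (R := R) x := by
  simp only [RingHom.mem_range, mem_denomScaling, map_one, one_mul]
  constructor
  · rintro h ⟨r', hr'⟩; exact h ⟨r', hr'.symm⟩
  · rintro h ⟨r', hr'⟩; exact h ⟨r', hr'.symm⟩

/-- A maximal denominator ideal is prime, and we can always find one above a given one. -/
lemma exists_max_denomScaling (x : F) (hx : x ∉ (algebraMap R F).range) :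
    ∃ y : F, y ∉ (algebraMap R F).range ∧ denomScaling (R := R) x ≤ denomScaling (R := R) y ∧
      (denomScaling (R := R) y).IsPrime ∧
      ∀ z : F, z ∉ (algebraMap R F).range → denomScaling (R := R) y ≤ denomScaling (R := R) z →
        denomScaling (R := R) y = denomScaling (R := R) z := by
  obtain ⟨J, hJ, hmax⟩ := (set_has_maximal_iff_noetherian.mpr (inferInstance : IsNoetherian R R))
    {J : Ideal R | ∃ z : F, z ∉ (algebraMap R F).range ∧
      denomScaling (R := R) x ≤ denomScaling (R := R) z ∧ denomScaling (R := R) z = J}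
    ⟨denomScaling (R := R) x, x, hx, le_rfl, rfl⟩
  obtain ⟨y, hy, hxy, rfl⟩ := hJ
  have hmax' : ∀ z : F, z ∉ (algebraMap R F).range →
      denomScaling (R := R) y ≤ denomScaling (R := R) z →
      denomScaling (R := R) y = denomScaling (R := R) z := by
    intro z hz hle
    by_contra hne
    exact hmax (denomScaling (R := R) z) ⟨z, hz, le_trans hxy hle, rfl⟩ (lt_of_le_of_ne hle hne)
  refine ⟨y, hy, hxy, ?_, hmax'⟩
  constructor
  · intro htop
    exact (notMem_range_iff_denomScaling.mp hy) (htop ▸ Submodule.mem_top)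
  · intro a b hab
    by_cases ha : a ∈ denomScaling (R := R) y
    · exact Or.inl ha
    · right
      have hz : (algebraMap R F a) * y ∉ (algebraMap R F).range := by
        rintro ⟨c, hc⟩
        exact ha ⟨c, hc.symm ▸ rfl⟩
      have hle : denomScaling (R := R) y ≤ denomScaling (R := R) ((algebraMap R F a) * y) := by
        rintro r ⟨r', hr⟩
        exact ⟨a * r', by rw [← mul_assoc, mul_comm (algebraMap R F r), mul_assoc, hr,
          ← map_mul, map_mul]⟩
      have heq := hmax' _ hz hle
      have hbz : b ∈ denomScaling (R := R) ((algebraMap R F a) * y) := by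
        obtain ⟨c, hc⟩ := hab
        exact ⟨c, by rw [← mul_assoc, ← map_mul, mul_comm b a, hc]⟩
      rw [← heq] at hbz
      exact hbz

/-- A package: a "divisorial prime" of `R` together with its discrete valuation on `F`
and the key properties we need. -/
structure DivPrime (R F : Type*) [CommRing R] [Field F] [Algebra R F] where
  p : Ideal R
  hp : p.IsPrime
  v : Valuation F ℤₘ₀
  hv1 : ∀ r : R, v (algebraMap R F r) ≤ 1
  hv2 : ∀ r : R, v (algebraMap R F r) < 1 ↔ r ∈ p
  hv3 : ∀ x : F, v x ≤ 1 → ∃ r s : R, s ∉ p ∧ x * algebraMap R F s = algebraMap R F r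
  hht : ∀ q : Ideal R, q.IsPrime → q ≤ p → q ≠ ⊥ → q = p

/-- Every element of `F` not in `R` is "detected" by some divisorial prime. -/
lemma exists_divPrime (x : F) (hx : x ∉ (algebraMap R F).range) :
    ∃ d : DivPrime R F, ¬ d.v x ≤ 1 := by
  classical
  obtain ⟨y, hy, hxy, hp, hmax⟩ := exists_max_denomScaling x hx
  set p : Ideal R := denomScaling (R := R) y with hpdef
  have hinjRF : Function.Injective (algebraMap R F) := IsFractionRing.injective R F
  have hyp : ∀ u ∈ p, ∃ r' : R, y * algebraMap R F u = algebraMap R F r' := by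
    rintro u ⟨r', hr'⟩
    exact ⟨r', by rw [mul_comm]; exact hr'⟩
  -- p is nonzero
  obtain ⟨⟨a₀, s₀⟩, hs₀⟩ := IsLocalization.surj (nonZeroDivisors R) y
  have hs₀p : (s₀ : R) ∈ p := ⟨a₀, by rw [mul_comm]; exact hs₀⟩
  have hs₀0 : (s₀ : R) ≠ 0 := nonZeroDivisors.ne_zero s₀.2
  have hpbot : p ≠ ⊥ := by
    intro hb
    rw [hb, Ideal.mem_bot] at hs₀p
    exact hs₀0 hs₀p
  -- find t ∈ p with y·t ∈ R ∖ p
  have hex : ∃ t ∈ p, ∃ r₂ : R, y * algebraMap R F t = algebraMap R F r₂ ∧ r₂ ∉ p := by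
    by_contra hcon
    push_neg at hcon
    have hint : IsIntegral R y := by
      refine isIntegral_of_smul_mem_submodule (R := R) (A := F) (M := F) (Submodule.map (Algebra.linearMap R F) p) ?_ ?_ y ?_
      · refine Submodule.ne_bot_iff _ |>.mpr ⟨algebraMap R F (s₀ : R), ?_, ?_⟩
        · exact Submodule.mem_map.mpr ⟨(s₀ : R), hs₀p, rfl⟩
        · intro h0
          exact hs₀0 (hinjRF (h0.trans (map_zero _).symm))
      · exact (IsNoetherian.noetherian p).map _
      · rintro n hn
        obtain ⟨u, hu, rfl⟩ := Submodule.mem_map.mp hn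
        obtain ⟨r', hr'⟩ := hyp u hu
        have hr'p : r' ∈ p := hcon u hu r' hr'
        refine Submodule.mem_map.mpr ⟨r', hr'p, ?_⟩
        rw [Algebra.linearMap_apply, Algebra.linearMap_apply, smul_eq_mul, hr']
    obtain ⟨c, hc⟩ := IsIntegrallyClosed.isIntegral_iff.mp hint
    exact hy ⟨c, hc⟩
  obtain ⟨t, ht, r₂, hyt, hr₂⟩ := hex
  clear hs₀ hs₀p
  -- the localization at p is a DVR
  haveI := hp
  set A := Localization.AtPrime p with hA
  haveI : IsNoetherianRing A := IsLocalization.isNoetherianRing p.primeCompl A inferInstance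
  have hinjRA : Function.Injective (algebraMap R A) :=
    IsLocalization.injective A p.primeCompl_le_nonZeroDivisors
  have ht0 : t ≠ 0 := by
    rintro rfl
    rw [map_zero, mul_zero] at hyt
    have : r₂ = 0 := hinjRF (hyt.symm.trans (map_zero _).symm)
    exact hr₂ (this ▸ p.zero_mem)
  have htA0 : algebraMap R A t ≠ 0 := fun h0 => ht0 (hinjRA (h0.trans (map_zero _).symm))
  have hAnf : ¬ IsField A := by
    intro hfield
    have := IsLocalRing.isField_iff_maximalIdeal_eq.mp hfield
    have htm : algebraMap R A t ∈ maximalIdeal A :=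
      (IsLocalization.AtPrime.to_map_mem_maximal_iff A p t).mpr ht
    rw [this] at htm
    exact htA0 htm
  have hprinc : (maximalIdeal A).IsPrincipal := by
    refine ⟨algebraMap R A t, ?_⟩
    rw [← Localization.AtPrime.map_eq_maximalIdeal]
    apply le_antisymm
    · rw [Ideal.map_le_iff_le_comap]
      intro u hu
      rw [Ideal.mem_comap, Ideal.submodule_span_eq, Ideal.mem_span_singleton]
      obtain ⟨r₁, hr₁⟩ := hyp u hu
      have hr₂c : r₂ ∈ p.primeCompl := hr₂
      refine ⟨IsLocalization.mk' A r₁ ⟨r₂, hr₂c⟩, ?_⟩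
      have hu2 : IsUnit (algebraMap R A r₂) := IsLocalization.map_units A ⟨r₂, hr₂c⟩
      apply hu2.mul_left_cancel
      have key : u * r₂ = t * r₁ := by
        apply hinjRF
        rw [map_mul, map_mul, ← hyt, ← hr₁]; ring
      calc algebraMap R A r₂ * algebraMap R A u = algebraMap R A (u * r₂) := by
            rw [map_mul, mul_comm]
        _ = algebraMap R A t * algebraMap R A r₁ := by rw [key, map_mul]
        _ = algebraMap R A r₂ * (algebraMap R A t * IsLocalization.mk' A r₁ ⟨r₂, hr₂c⟩) := by
            rw [← IsLocalization.mk'_spec A r₁ ⟨r₂, hr₂c⟩]; ring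
    · rw [Ideal.submodule_span_eq, Ideal.span_le, Set.singleton_subset_iff]
      exact Ideal.mem_map_of_mem _ ht
  haveI hdvr : IsDiscreteValuationRing A :=
    ((IsDiscreteValuationRing.TFAE A hAnf).out 0 4).mpr hprinc
  haveI : IsDedekindDomain A := inferInstance
  -- F is the fraction field of A
  have hunits : ∀ s : p.primeCompl, IsUnit (algebraMap R F s) := by
    rintro ⟨s, hs⟩
    refine isUnit_iff_ne_zero.mpr (fun h0 => ?_)
    have : s = 0 := hinjRF (h0.trans (map_zero _).symm)
    exact hs (this ▸ p.zero_mem)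
  letI : Algebra A F := (IsLocalization.lift (M := p.primeCompl) (S := A) hunits).toAlgebra
  haveI : IsScalarTower R A F := IsScalarTower.of_algebraMap_eq
    (fun r => (IsLocalization.lift_eq hunits r).symm)
  haveI : IsFractionRing A F := IsFractionRing.isFractionRing_of_isLocalization p.primeCompl A F
    p.primeCompl_le_nonZeroDivisors
  have hmaxbot : maximalIdeal A ≠ ⊥ := fun hbot =>
    hAnf (IsLocalRing.isField_iff_maximalIdeal_eq.mpr hbot)
  let w : HeightOneSpectrum A := ⟨maximalIdeal A, inferInstance, hmaxbot⟩
  let v : Valuation F ℤₘ₀ := w.valuation F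
  have hP1 : ∀ r : R, v (algebraMap R F r) ≤ 1 := by
    intro r
    rw [IsScalarTower.algebraMap_apply R A F r]
    exact w.valuation_le_one _
  have hP2 : ∀ r : R, v (algebraMap R F r) < 1 ↔ r ∈ p := by
    intro r
    rw [IsScalarTower.algebraMap_apply R A F r, w.valuation_lt_one_iff_dvd,
      Ideal.dvd_iff_le, Ideal.span_singleton_le_iff_mem]
    exact IsLocalization.AtPrime.to_map_mem_maximal_iff A p r
  have hP3 : ∀ x : F, v x ≤ 1 →
      ∃ r s : R, s ∉ p ∧ x * algebraMap R F s = algebraMap R F r := by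
    intro x hx
    have hxA : ∃ c : A, algebraMap A F c = x := by
      obtain ⟨a, s, rfl⟩ := IsLocalization.exists_mk'_eq (M := nonZeroDivisors A) x
      by_cases ha0 : a = 0
      · exact ⟨0, by rw [map_zero, ha0, IsLocalization.mk'_zero]⟩
      have hs0 : (s : A) ≠ 0 := nonZeroDivisors.ne_zero s.2
      rw [w.valuation_of_mk'] at hx
      have hsv : w.intValuation (s : A) ≠ 0 := w.intValuation_ne_zero _ hs0
      have hle : w.intValuation a ≤ w.intValuation (s : A) := by
        rwa [div_le_one₀ (lt_of_le_of_ne (zero_le') (Ne.symm hsv))] at hx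
      obtain ⟨u, hu⟩ := WithZero.ne_zero_iff_exists.mp hsv
      have hu1 : u ≤ 1 := by
        have h1 := w.intValuation_le_one (s : A)
        rw [← hu, ← WithZero.coe_one,
          WithZero.coe_le_coe] at h1
        exact h1
      have hu0 : Multiplicative.toAdd u ≤ 0 := by
        rw [← toAdd_one (α := ℤ)]
        exact Multiplicative.toAdd_le.mpr hu1
      set n : ℕ := (- Multiplicative.toAdd u).toNat with hn
      have hsval : w.intValuation (s : A) = (↑(Multiplicative.ofAdd (-(n : ℤ))) : ℤₘ₀) := by
        rw [← hu, hn]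
        congr 1
        rw [Int.toNat_of_nonneg (by omega), neg_neg, ofAdd_toAdd]
      have hdvds : w.asIdeal ^ n ∣ Ideal.span {(s : A)} :=
        (w.intValuation_le_pow_iff_dvd _ _).mp (le_of_eq hsval)
      have hndvd : ¬ w.asIdeal ^ (n + 1) ∣ Ideal.span {(s : A)} := by
        intro hdvd
        have := (w.intValuation_le_pow_iff_dvd (s : A) (n + 1)).mpr hdvd
        rw [hsval] at this
        have h3 := Multiplicative.ofAdd_le.mp (WithZero.coe_le_coe.mp this)
        omega
      have hdvda : w.asIdeal ^ n ∣ Ideal.span {a} :=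
        (w.intValuation_le_pow_iff_dvd _ _).mp (hle.trans (le_of_eq hsval))
      have htfae := (IsDiscreteValuationRing.TFAE A hAnf).out 0 6 (by rfl) (by rfl)
      obtain ⟨k, hk⟩ := htfae.mp hdvr (Ideal.span {(s : A)}) (by rwa [ne_eq, Ideal.span_singleton_eq_bot])
      have hwmax : w.asIdeal = maximalIdeal A := rfl
      have hkn : k ≤ n := by
        by_contra hlt
        push_neg at hlt
        exact hndvd (Ideal.dvd_iff_le.mpr (hk.trans_le (hwmax ▸ Ideal.pow_le_pow_right hlt)))
      have hsdvda : Ideal.span {(s : A)} ∣ Ideal.span {a} := by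
        refine dvd_trans (Ideal.dvd_iff_le.mpr ?_) hdvda
        rw [hk, hwmax]
        exact Ideal.pow_le_pow_right hkn
      obtain ⟨c, hc⟩ := (Ideal.span_singleton_le_span_singleton.mp (Ideal.le_of_dvd hsdvda))
      refine ⟨c, ?_⟩
      have hsu : IsUnit (algebraMap A F (s : A)) := IsLocalization.map_units F s
      apply hsu.mul_left_cancel
      rw [← map_mul, ← hc, mul_comm, IsLocalization.mk'_spec]
    obtain ⟨c, rfl⟩ := hxA
    obtain ⟨r, s, rfl⟩ := IsLocalization.exists_mk'_eq (M := p.primeCompl) c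
    refine ⟨r, s, s.2, ?_⟩
    rw [IsScalarTower.algebraMap_apply R A F (s : R), ← map_mul, IsLocalization.mk'_spec,
      ← IsScalarTower.algebraMap_apply R A F r]
  have hP4 : ∀ q : Ideal R, q.IsPrime → q ≤ p → q ≠ ⊥ → q = p := by
    intro q hq hqp hqbot
    have hd : Disjoint ((p.primeCompl : Submonoid R) : Set R) (q : Set R) :=
      Set.disjoint_left.mpr (fun x hx hxq => hx (hqp hxq))
    have hQp : (q.map (algebraMap R A)).IsPrime :=
      IsLocalization.isPrime_of_isPrime_disjoint p.primeCompl A q hq hd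
    have hQc : (q.map (algebraMap R A)).comap (algebraMap R A) = q :=
      IsLocalization.comap_map_of_isPrime_disjoint p.primeCompl A hq hd
    have hQbot : q.map (algebraMap R A) ≠ ⊥ := by
      obtain ⟨t₀, ht₀q, ht₀⟩ := Submodule.exists_mem_ne_zero_of_ne_bot hqbot
      intro hb
      have : algebraMap R A t₀ ∈ q.map (algebraMap R A) := Ideal.mem_map_of_mem _ ht₀q
      rw [hb, Ideal.mem_bot] at this
      exact ht₀ (hinjRA (this.trans (map_zero _).symm))
    have htfae := (IsDiscreteValuationRing.TFAE A hAnf).out 0 6 (by rfl) (by rfl)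
    obtain ⟨k, hk⟩ := htfae.mp hdvr _ hQbot
    have hk1 : 1 ≤ k := by
      rcases Nat.eq_zero_or_pos k with rfl | hk1
      · rw [pow_zero, Ideal.one_eq_top] at hk
        exact absurd hk hQp.ne_top
      · exact hk1
    obtain ⟨ϖ, hϖ⟩ := IsDiscreteValuationRing.exists_irreducible A
    have hmax : maximalIdeal A = Ideal.span {ϖ} :=
      (IsDiscreteValuationRing.irreducible_iff_uniformizer ϖ).mp hϖ
    have hϖk : ϖ ^ k ∈ q.map (algebraMap R A) := by
      rw [hk, hmax, Ideal.span_singleton_pow]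
      exact Ideal.subset_span rfl
    have hϖq : ϖ ∈ q.map (algebraMap R A) := hQp.mem_of_pow_mem _ hϖk
    have hQmax : q.map (algebraMap R A) = maximalIdeal A := by
      apply le_antisymm (IsLocalRing.le_maximalIdeal hQp.ne_top)
      rw [hmax, Ideal.span_le, Set.singleton_subset_iff]
      exact hϖq
    rw [← hQc, hQmax]
    exact IsLocalization.AtPrime.comap_maximalIdeal A p
  refine ⟨⟨p, hp, v, hP1, hP2, hP3, hP4⟩, ?_⟩
  intro hvx
  obtain ⟨r, s, hs, hxs⟩ := hP3 x hvx
  exact hs (hxy ⟨r, by rw [mul_comm]; exact hxs⟩)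

/-- Main lemma: under the functional equation, the valuation of `α` at any
divisorial prime cannot be `< 1`. -/
lemma main_scaling_lemma (Ψ : RingAut F)
    (hΨ' : ∀ n : ℤ, ∃ τ : RingAut R, ∀ r : R, (Ψ ^ n) (algebraMap R F r) = algebraMap R F (τ r))
    (α f : F) (hα : α ≠ 0) (hf : f ≠ 0)
    (h : ∀ n : ℤ, (Ψ ^ n) f = α ^ n * f) (d : DivPrime R F) : ¬ d.v α < 1 := by
  classical
  intro hc
  have hinjRF : Function.Injective (algebraMap R F) := IsFractionRing.injective R F
  set τ : ℤ → RingAut R := fun n => Classical.choose (hΨ' n) with hτdef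
  have hτ : ∀ (n : ℤ) (r : R), (Ψ ^ n) (algebraMap R F r) = algebraMap R F (τ n r) :=
    fun n => Classical.choose_spec (hΨ' n)
  have hcomp : ∀ (a b : ℤ) (x : F), (Ψ ^ a) ((Ψ ^ b) x) = (Ψ ^ (a + b)) x := by
    intro a b x
    rw [zpow_add]; rfl
  have hcan : ∀ (k : ℤ) (x : F), (Ψ ^ k) ((Ψ ^ (-k)) x) = x := by
    intro k x
    rw [hcomp, add_neg_cancel, zpow_zero]; rfl
  have hcan' : ∀ (k : ℤ) (x : F), (Ψ ^ (-k)) ((Ψ ^ k) x) = x := by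
    intro k x
    rw [hcomp, neg_add_cancel, zpow_zero]; rfl
  have hτcan : ∀ (n : ℤ) (r : R), τ (-n) (τ n r) = r := by
    intro n r
    apply hinjRF
    rw [← hτ (-n), ← hτ n, hcan']
  -- the translated primes
  set q : ℤ → Ideal R := fun n => d.p.comap (τ (-n)) with hqdef
  have hqmem : ∀ (n : ℤ) (r : R), r ∈ q n ↔ τ (-n) r ∈ d.p := by
    intro n r
    rw [hqdef]
    exact Ideal.mem_comap
  have hqprime : ∀ n : ℤ, (q n).IsPrime := by
    intro n
    rw [hqdef]
    exact Ideal.IsPrime.comap (hK := d.hp) _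
  -- the unit criterion
  have hunit : ∀ (n : ℤ) (s : R), s ∉ q n → d.v (algebraMap R F (τ (-n) s)) = 1 := by
    intro n s hs
    refine le_antisymm (d.hv1 _) (not_lt.mp (fun hlt => ?_))
    exact hs ((hqmem n s).mpr ((d.hv2 _).mp hlt))
  -- characterization of the valuation ring of v ∘ Ψ^{-n} in terms of q n
  have hW : ∀ (n : ℤ) (x : F),
      d.v ((Ψ ^ (-n)) x) ≤ 1 ↔
        ∃ r s : R, s ∉ q n ∧ x * algebraMap R F s = algebraMap R F r := by
    intro n x
    constructor
    · intro hle
      obtain ⟨r, s, hs, hxs⟩ := d.hv3 _ hle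
      refine ⟨τ n r, τ n s, ?_, ?_⟩
      · intro hmem
        rw [hqmem, hτcan] at hmem
        exact hs hmem
      · have hcongr := congrArg (Ψ ^ n) hxs
        rw [map_mul, hcan n x, hτ, hτ] at hcongr
        exact hcongr
    · rintro ⟨r, s, hs, hxs⟩
      have h1 := congrArg (Ψ ^ (-n)) hxs
      rw [map_mul, hτ, hτ] at h1
      have h2 : d.v ((Ψ ^ (-n)) x) * d.v (algebraMap R F (τ (-n) s)) ≤ 1 := by
        rw [← d.v.map_mul, h1]; exact d.hv1 _
      rwa [hunit n s hs, mul_one] at h2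
  -- numeric setup
  have hvα0 : d.v α ≠ 0 := fun h0 => hα (d.v.zero_iff.mp h0)
  have hvf0 : d.v f ≠ 0 := fun h0 => hf (d.v.zero_iff.mp h0)
  obtain ⟨cu, hcu⟩ := WithZero.ne_zero_iff_exists.mp hvα0
  obtain ⟨fu, hfu⟩ := WithZero.ne_zero_iff_exists.mp hvf0
  set E : ℤ := Multiplicative.toAdd cu with hEdef
  set G : ℤ := Multiplicative.toAdd fu with hGdef
  have hE : E < 0 := by
    have h1 : cu < 1 := by
      rw [← WithZero.coe_lt_coe, hcu, WithZero.coe_one]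
      exact hc
    have h2 := Multiplicative.toAdd_lt.mpr h1
    rwa [toAdd_one] at h2
  have hPval : ∀ k : ℤ, d.v ((Ψ ^ k) f) = ((cu ^ k * fu : Multiplicative ℤ) : ℤₘ₀) := by
    intro k
    rw [h k, d.v.map_mul, map_zpow₀, ← hcu, ← hfu, ← WithZero.coe_zpow, ← WithZero.coe_mul]
  have htoadd : ∀ k : ℤ, Multiplicative.toAdd (cu ^ k * fu) = k * E + G := by
    intro k
    rw [toAdd_mul, toAdd_zpow, smul_eq_mul, hEdef, hGdef]
  have hPiff : ∀ k : ℤ, (d.v ((Ψ ^ k) f) ≤ 1 ↔ k * E + G ≤ 0) := by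
    intro k
    rw [hPval, ← WithZero.coe_one, WithZero.coe_le_coe, ← Multiplicative.toAdd_le, toAdd_one,
      htoadd]
  -- the primes q n are pairwise distinct
  have hinj : Function.Injective q := by
    intro i j hij
    by_contra hne
    have hiff : ∀ x : F, d.v ((Ψ ^ (-i)) x) ≤ 1 ↔ d.v ((Ψ ^ (-j)) x) ≤ 1 := by
      intro x; rw [hW i x, hW j x, hij]
    have hstep : ∀ t : ℤ, (d.v ((Ψ ^ (t * (j - i))) f) ≤ 1 ↔
        d.v ((Ψ ^ ((t + 1) * (j - i))) f) ≤ 1) := by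
      intro t
      have h0 := hiff ((Ψ ^ (j + t * (j - i))) f)
      rw [hcomp, hcomp] at h0
      have e1 : -i + (j + t * (j - i)) = (t + 1) * (j - i) := by ring
      have e2 : -j + (j + t * (j - i)) = t * (j - i) := by ring
      rw [e1, e2] at h0
      exact h0.symm
    have hconst : ∀ t : ℤ,
        (d.v ((Ψ ^ ((0 : ℤ) * (j - i))) f) ≤ 1 ↔ d.v ((Ψ ^ (t * (j - i))) f) ≤ 1) := by
      intro t
      induction t using Int.induction_on with
      | zero => exact Iff.rfl
      | succ k ih => exact ih.trans (hstep k)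
      | pred k ih =>
          have hs := hstep (-(k : ℤ) - 1)
          rw [show (-(k : ℤ) - 1 + 1) = -(k : ℤ) by ring] at hs
          exact ih.trans hs.symm
    have hm : (j - i) ≠ 0 := sub_ne_zero.mpr (Ne.symm hne)
    have hnum : ∀ t : ℤ, ((0 : ℤ) * (j - i) * E + G ≤ 0 ↔ t * (j - i) * E + G ≤ 0) := by
      intro t
      rw [← hPiff, ← hPiff]
      exact hconst t
    set M : ℤ := (j - i) * E with hM
    have hM0 : M ≠ 0 := mul_ne_zero hm (by omega)
    have hM2 : 1 ≤ M * M := by nlinarith [Int.one_le_abs hM0, abs_mul_abs_self M, abs_nonneg M]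
    have hT : (-(G.natAbs + 1) * M) * (j - i) * E + G ≤ 0 := by
      have e3 : (-(G.natAbs + 1) * M) * (j - i) * E = -(G.natAbs + 1) * (M * M) := by
        rw [hM]; ring
      rw [e3]
      have hGa : G ≤ (G.natAbs : ℤ) := by omega
      nlinarith
    have hG0 : G ≤ 0 := by
      have := (hnum (-(G.natAbs + 1) * M)).mpr hT
      simpa using this
    have hF : ¬((((G.natAbs : ℤ) + 1) * M) * (j - i) * E + G ≤ 0) := by
      have e4 : (((G.natAbs : ℤ) + 1) * M) * (j - i) * E = ((G.natAbs : ℤ) + 1) * (M * M) := by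
        rw [hM]; ring
      rw [e4]
      have hGa : -(G.natAbs : ℤ) ≤ G := by omega
      nlinarith
    exact hF ((hnum _).mp (by simpa using hG0))
  -- write f = a / b
  obtain ⟨⟨a, b⟩, hab⟩ := IsLocalization.surj (nonZeroDivisors R) f
  have hb0 : (b : R) ≠ 0 := nonZeroDivisors.ne_zero b.2
  -- for large n, b lies in q n
  have hmemq : ∀ n : ℤ, 1 < d.v ((Ψ ^ (-n)) f) → (b : R) ∈ q n := by
    intro n hgt
    by_contra hbq
    have h1 := congrArg (Ψ ^ (-n)) hab
    rw [map_mul, hτ, hτ] at h1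
    have h2 : d.v ((Ψ ^ (-n)) f) * d.v (algebraMap R F (τ (-n) (b : R))) ≤ 1 := by
      rw [← d.v.map_mul, h1]; exact d.hv1 _
    rw [hunit n _ hbq, mul_one] at h2
    exact absurd h2 (not_le.mpr hgt)
  have hgrow : ∀ n : ℤ, ((G.natAbs : ℤ) + 1) ≤ n → 1 < d.v ((Ψ ^ (-n)) f) := by
    intro n hn
    rw [hPval (-n), ← WithZero.coe_one, WithZero.coe_lt_coe, ← Multiplicative.toAdd_lt,
      toAdd_one, htoadd]
    have hEn : n * 1 ≤ n * (-E) := mul_le_mul_of_nonneg_left (by omega) (by omega)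
    have hGa : -(G.natAbs : ℤ) ≤ G := by omega
    linarith
  -- each such q n is a minimal prime over (b)
  have hqmin : ∀ n : ℤ, (b : R) ∈ q n → q n ∈ (Ideal.span {(b : R)}).minimalPrimes := by
    intro n hbn
    constructor
    · exact ⟨hqprime n, (Ideal.span_singleton_le_iff_mem _).mpr hbn⟩
    · rintro y ⟨hyprime, hyb⟩ hle
      have hQ : (y.comap ((τ (-n)).symm : R ≃+* R)) = d.p := by
        refine d.hht _ (Ideal.IsPrime.comap (hK := hyprime) _) ?_ ?_
        · intro x hx
          have hx' : (τ (-n)).symm x ∈ y := Ideal.mem_comap.mp hx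
          have h2 := (hqmem n _).mp (hle hx')
          rwa [RingEquiv.apply_symm_apply] at h2
        · intro hbot
          have hbmem : τ (-n) (b : R) ∈ y.comap ((τ (-n)).symm : R ≃+* R) := by
            rw [Ideal.mem_comap, RingEquiv.symm_apply_apply]
            exact (Ideal.span_singleton_le_iff_mem _).mp hyb
          rw [hbot, Ideal.mem_bot] at hbmem
          exact hb0 ((τ (-n)).injective (by rw [hbmem, map_zero]))
      intro x hx
      have h1 : τ (-n) x ∈ d.p := (hqmem n x).mp hx
      rw [← hQ] at h1
      have h2 := Ideal.mem_comap.mp h1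
      rwa [RingEquiv.symm_apply_apply] at h2
  have hfin : (Ideal.span {(b : R)}).minimalPrimes.Finite := by
    rw [Ideal.minimalPrimes_eq_comap]
    exact ((minimalPrimes.finite_of_isNoetherianRing _).image _)
  have hginj : Function.Injective (fun k : ℕ => q (((G.natAbs : ℤ) + 1) + k)) := by
    intro i j hij
    have := hinj hij
    omega
  have hgmem : ∀ k : ℕ, q (((G.natAbs : ℤ) + 1) + k) ∈ (Ideal.span {(b : R)}).minimalPrimes :=
    fun k => hqmin _ (hmemq _ (hgrow _ (by omega)))
  exact hfin.not_infinite (Set.infinite_of_injective_forall_mem hginj hgmem)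

end ScalingAuxSec

/-- Let X be a normal affine irreducible variety over k (modeled by its
coordinate ring R: an integrally closed Noetherian domain which is a finitely generated
k-algebra, with fraction field F = k(X)). Let Ψ be an automorphism of X (a ring
automorphism of F restricting to an automorphism of R), and α, f ∈ k(X)* with
(Ψ*)ⁿ(f) = αⁿ·f for all n ∈ ℤ. Then α is an invertible element of O(X) = R. -/
theorem scaling_factor_is_unit (k R F : Type*) [Field k] [CommRing R] [IsDomain R]
    [Algebra k R] [Algebra.FiniteType k R] [IsNoetherianRing R] [IsIntegrallyClosed R]
    [Field F] [Algebra R F] [IsFractionRing R F]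
    (Ψ : RingAut F)
    (hΨ : ∃ Ψ₀ : RingAut R, ∀ r : R, Ψ (algebraMap R F r) = algebraMap R F (Ψ₀ r))
    (α f : F) (hα : α ≠ 0) (hf : f ≠ 0)
    (h : ∀ n : ℤ, (Ψ ^ n) f = α ^ n * f) :
    ∃ u : Rˣ, algebraMap R F u = α := by
  classical
  obtain ⟨Ψ₀, hΨ₀⟩ := hΨ
  have hinjRF : Function.Injective (algebraMap R F) := IsFractionRing.injective R F
  -- the automorphisms of F preserving R form a subgroup
  let S : Subgroup (RingAut F) :=
    { carrier := {σ : RingAut F |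
        ∃ τ : RingAut R, ∀ r : R, σ (algebraMap R F r) = algebraMap R F (τ r)}
      one_mem' := ⟨1, fun r => rfl⟩
      mul_mem' := by
        rintro σ₁ σ₂ ⟨τ₁, h₁⟩ ⟨τ₂, h₂⟩
        refine ⟨τ₁ * τ₂, fun r => ?_⟩
        show σ₁ (σ₂ _) = _
        rw [h₂, h₁]
        rfl
      inv_mem' := by
        rintro σ ⟨τ, hτ⟩
        refine ⟨τ⁻¹, fun r => ?_⟩
        apply σ.injective
        have h1 : σ (σ⁻¹ (algebraMap R F r)) = algebraMap R F r := σ.apply_symm_apply _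
        have h2 : τ (τ⁻¹ r) = r := τ.apply_symm_apply r
        rw [h1, hτ (τ⁻¹ r), h2] }
  have hΨS : Ψ ∈ S := ⟨Ψ₀, hΨ₀⟩
  have hΨ' : ∀ n : ℤ, ∃ τ : RingAut R,
      ∀ r : R, (Ψ ^ n) (algebraMap R F r) = algebraMap R F (τ r) :=
    fun n => S.zpow_mem hΨS n
  have hΨinv' : ∀ n : ℤ, ∃ τ : RingAut R,
      ∀ r : R, (Ψ⁻¹ ^ n) (algebraMap R F r) = algebraMap R F (τ r) := by
    intro n
    obtain ⟨τ, hτ⟩ := hΨ' (-n)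
    exact ⟨τ, fun r => by rw [inv_zpow, ← zpow_neg]; exact hτ r⟩
  have hinv : ∀ n : ℤ, (Ψ⁻¹ ^ n) f = (α⁻¹) ^ n * f := by
    intro n
    rw [inv_zpow, ← zpow_neg, h (-n), inv_zpow', zpow_neg]
  have h1 : ∀ d : DivPrime R F, ¬ d.v α < 1 :=
    fun d => main_scaling_lemma Ψ hΨ' α f hα hf h d
  have h2 : ∀ d : DivPrime R F, ¬ d.v α⁻¹ < 1 :=
    fun d => main_scaling_lemma Ψ⁻¹ hΨinv' α⁻¹ f (inv_ne_zero hα) hf hinv d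
  have hvα0 : ∀ d : DivPrime R F, d.v α ≠ 0 :=
    fun d h0 => hα (d.v.zero_iff.mp h0)
  have hone : ∀ d : DivPrime R F, d.v α = 1 := by
    intro d
    have ha := not_lt.mp (h1 d)
    have hb := not_lt.mp (h2 d)
    rw [map_inv₀] at hb
    refine le_antisymm ?_ ha
    calc d.v α = d.v α * 1 := (mul_one _).symm
      _ ≤ d.v α * (d.v α)⁻¹ := mul_le_mul_right hb _
      _ = 1 := mul_inv_cancel₀ (hvα0 d)
  have hmem : ∀ x : F, (∀ d : DivPrime R F, d.v x ≤ 1) →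
      ∃ r : R, algebraMap R F r = x := by
    intro x hx
    by_contra hnr
    have hxr : x ∉ (algebraMap R F).range := by
      rintro ⟨r, hr⟩
      exact hnr ⟨r, hr⟩
    obtain ⟨d, hd⟩ := exists_divPrime x hxr
    exact hd (hx d)
  obtain ⟨r, hr⟩ := hmem α (fun d => le_of_eq (hone d))
  obtain ⟨r', hr'⟩ := hmem α⁻¹ (fun d => by rw [map_inv₀, hone d, inv_one])
  have hrr' : r * r' = 1 := hinjRF (by rw [map_mul, hr, hr', mul_inv_cancel₀ hα, map_one])
  refine ⟨Units.mkOfMulEqOne r r' hrr', ?_⟩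
  rw [Units.val_mkOfMulEqOne]
  exact hr
end

section
/- Let Φ be the polynomial automorphism of k² (char k = 0) given by Φ = f ∘ g where f(x,y) = (x + y², y) and g(x,y) = (x, y + x²). Then the maximal degree d(n) of the coordinate functions of the n-th iterate Φⁿ satisfies d(n) = 4ⁿ. In particular, d(n) is unbounded, so Φ is not of the form φ_h for any algebraic action φ of a linear algebraic group on k². -/
open MvPolynomial

/-- Composition of polynomial endomorphisms of the affine plane:
(P ∘ Q)(x) = P(Q(x)), given by substituting Q into P. -/
noncomputable def polyComp2 (k : Type*) [CommSemiring k]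
    (P Q : Fin 2 → MvPolynomial (Fin 2) k) : Fin 2 → MvPolynomial (Fin 2) k :=
  fun i => MvPolynomial.bind₁ Q (P i)

/-- The automorphism f(x,y) = (x + y², y) of the plane. -/
noncomputable def fMap (k : Type*) [CommSemiring k] : Fin 2 → MvPolynomial (Fin 2) k :=
  ![X 0 + (X 1) ^ 2, X 1]

/-- The automorphism g(x,y) = (x, y + x²) of the plane. -/
noncomputable def gMap (k : Type*) [CommSemiring k] : Fin 2 → MvPolynomial (Fin 2) k :=
  ![X 0, X 1 + (X 0) ^ 2]

/-- The automorphism Φ = f ∘ g. -/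
noncomputable def PhiMap (k : Type*) [CommSemiring k] : Fin 2 → MvPolynomial (Fin 2) k :=
  polyComp2 k (fMap k) (gMap k)

/-- The n-th iterate Φⁿ. -/
noncomputable def PhiIter (k : Type*) [CommSemiring k] :
    ℕ → (Fin 2 → MvPolynomial (Fin 2) k)
  | 0 => fun i => X i
  | n + 1 => polyComp2 k (PhiMap k) (PhiIter k n)

/-- d(n): the maximum of the total degrees of the coordinate functions of Φⁿ. -/
noncomputable def dDeg (k : Type*) [CommSemiring k] (n : ℕ) : ℕ :=
  max ((PhiIter k n 0).totalDegree) ((PhiIter k n 1).totalDegree)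

lemma PhiMap_zero (k : Type*) [CommSemiring k] :
    PhiMap k 0 = X 0 + (X 1 + (X 0) ^ 2) ^ 2 := by
  simp [PhiMap, polyComp2, fMap, gMap, bind₁_X_right]
lemma PhiMap_one (k : Type*) [CommSemiring k] :
    PhiMap k 1 = X 1 + (X 0) ^ 2 := by
  simp [PhiMap, polyComp2, fMap, gMap, bind₁_X_right]
lemma PhiIter_succ_zero (k : Type*) [CommSemiring k] (n : ℕ) :
    PhiIter k (n + 1) 0 =
      PhiIter k n 0 + (PhiIter k n 1 + (PhiIter k n 0) ^ 2) ^ 2 := by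
  show MvPolynomial.bind₁ (PhiIter k n) (PhiMap k 0) = _
  rw [PhiMap_zero]; simp [bind₁_X_right]
lemma PhiIter_succ_one (k : Type*) [CommSemiring k] (n : ℕ) :
    PhiIter k (n + 1) 1 = PhiIter k n 1 + (PhiIter k n 0) ^ 2 := by
  show MvPolynomial.bind₁ (PhiIter k n) (PhiMap k 1) = _
  rw [PhiMap_one]; simp [bind₁_X_right]
lemma PhiIter_one (k : Type*) [CommSemiring k] : PhiIter k 1 = PhiMap k := by
  funext i
  show MvPolynomial.bind₁ (fun i => X i) (PhiMap k i) = _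
  simp [bind₁_X_left]

lemma natDegree_aeval_le {k : Type*} [CommSemiring k] [Nontrivial k]
    (P : MvPolynomial (Fin 2) k) :
    (MvPolynomial.aeval ![(Polynomial.X : Polynomial k), 0] P).natDegree ≤ P.totalDegree := by
  conv_lhs => rw [P.as_sum]
  rw [map_sum]
  apply Polynomial.natDegree_sum_le_of_forall_le
  intro m hm
  rw [aeval_monomial]
  refine le_trans (Polynomial.natDegree_C_mul_le _ _) ?_
  refine le_trans ?_ (le_totalDegree hm)
  rw [Finsupp.prod]
  refine le_trans (Polynomial.natDegree_prod_le _ _) ?_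
  rw [Finsupp.sum]
  apply Finset.sum_le_sum
  intro i _
  refine le_trans Polynomial.natDegree_pow_le ?_
  fin_cases i <;> simp [Polynomial.natDegree_X]

lemma key_invariant (k : Type*) [Field k] [CharZero k] (n : ℕ) :
    (PhiIter k n 0).totalDegree ≤ 4 ^ n ∧ (PhiIter k n 1).totalDegree ≤ 4 ^ n ∧
    (MvPolynomial.aeval ![(Polynomial.X : Polynomial k), 0] (PhiIter k n 0)).Monic ∧
    (MvPolynomial.aeval ![(Polynomial.X : Polynomial k), 0] (PhiIter k n 0)).natDegree = 4 ^ n ∧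
    (MvPolynomial.aeval ![(Polynomial.X : Polynomial k), 0] (PhiIter k n 1)).natDegree ≤ 4 ^ n := by
  induction n with
  | zero =>
    refine ⟨?_, ?_, ?_, ?_, ?_⟩ <;>
      simp [PhiIter, totalDegree_X, Polynomial.monic_X, Matrix.cons_val_zero, Matrix.cons_val_one]
  | succ n ih =>
    obtain ⟨h0, h1, hm, hd, hq⟩ := ih
    set p := MvPolynomial.aeval ![(Polynomial.X : Polynomial k), 0] (PhiIter k n 0) with hp
    set q := MvPolynomial.aeval ![(Polynomial.X : Polynomial k), 0] (PhiIter k n 1) with hq'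
    have hpos : 0 < 4 ^ n := Nat.pow_pos (by norm_num)
    -- degree facts for r := q + p^2
    have hpp : (p ^ 2).Monic := hm.pow 2
    have hppd : (p ^ 2).natDegree = 2 * 4 ^ n := by rw [hm.natDegree_pow, hd]
    have hqlt : q.natDegree < (p ^ 2).natDegree := by
      rw [hppd]; omega
    have hr : (q + p ^ 2).Monic :=
      hpp.add_of_right (Polynomial.degree_lt_degree hqlt)
    have hrd : (q + p ^ 2).natDegree = 2 * 4 ^ n := by
      rw [Polynomial.natDegree_add_eq_right_of_natDegree_lt hqlt, hppd]
    have hr2 : ((q + p ^ 2) ^ 2).Monic := hr.pow 2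
    have hr2d : ((q + p ^ 2) ^ 2).natDegree = 4 ^ (n + 1) := by
      rw [hr.natDegree_pow, hrd]; ring
    have hplt : p.natDegree < ((q + p ^ 2) ^ 2).natDegree := by
      rw [hr2d, hd, pow_succ]; omega
    -- totalDegree bounds
    have t0 : (PhiIter k (n + 1) 0).totalDegree ≤ 4 ^ (n + 1) := by
      rw [PhiIter_succ_zero]
      refine le_trans (totalDegree_add _ _) (max_le ?_ ?_)
      · calc (PhiIter k n 0).totalDegree ≤ 4 ^ n := h0
          _ ≤ 4 ^ (n + 1) := Nat.pow_le_pow_right (by norm_num) (by omega)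
      · refine le_trans (totalDegree_pow _ _) ?_
        have : (PhiIter k n 1 + PhiIter k n 0 ^ 2).totalDegree ≤ 2 * 4 ^ n := by
          refine le_trans (totalDegree_add _ _) (max_le (by omega) ?_)
          refine le_trans (totalDegree_pow _ _) (by omega)
        calc 2 * (PhiIter k n 1 + PhiIter k n 0 ^ 2).totalDegree ≤ 2 * (2 * 4 ^ n) := by omega
          _ = 4 ^ (n + 1) := by ring
    have t1 : (PhiIter k (n + 1) 1).totalDegree ≤ 4 ^ (n + 1) := by
      rw [PhiIter_succ_one]
      refine le_trans (totalDegree_add _ _) (max_le ?_ ?_)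
      · calc (PhiIter k n 1).totalDegree ≤ 4 ^ n := h1
          _ ≤ 4 ^ (n + 1) := Nat.pow_le_pow_right (by norm_num) (by omega)
      · refine le_trans (totalDegree_pow _ _) ?_
        calc 2 * (PhiIter k n 0).totalDegree ≤ 2 * 4 ^ n := by omega
          _ ≤ 4 ^ (n + 1) := by rw [pow_succ]; omega
    have e0 : MvPolynomial.aeval ![(Polynomial.X : Polynomial k), 0] (PhiIter k (n + 1) 0)
        = p + (q + p ^ 2) ^ 2 := by
      rw [PhiIter_succ_zero]; push_cast [map_add, map_pow]; rfl
    have e1 : MvPolynomial.aeval ![(Polynomial.X : Polynomial k), 0] (PhiIter k (n + 1) 1)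
        = q + p ^ 2 := by
      rw [PhiIter_succ_one]; push_cast [map_add, map_pow]; rfl
    refine ⟨t0, t1, ?_, ?_, ?_⟩
    · rw [e0]; exact hr2.add_of_right (Polynomial.degree_lt_degree hplt)
    · rw [e0, Polynomial.natDegree_add_eq_right_of_natDegree_lt hplt, hr2d]
    · rw [e1, hrd, pow_succ]; omega

/-- For Φ = f ∘ g with f(x,y) = (x+y²,y) and g(x,y) = (x,y+x²) over a
field of characteristic zero, the maximal coordinate degree of Φⁿ satisfies d(n) = 4ⁿ;
in particular d is unbounded, so Φ is not of the form φ_h for an algebraic action φ of a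
group on k² (an algebraic action of a linear algebraic group having uniformly bounded
degrees of its coordinate functions). -/
theorem henon_iterate_degree_four_pow (k : Type*) [Field k] [CharZero k] :
    (∀ n : ℕ, dDeg k n = 4 ^ n) ∧
    (∀ B : ℕ, ∃ n : ℕ, B < dDeg k n) ∧
    (∀ (G : Type) (_ : Group G) (φ : G → Fin 2 → MvPolynomial (Fin 2) k),
      (∀ g g' : G, φ (g * g') = polyComp2 k (φ g) (φ g')) →
      (∃ B : ℕ, ∀ (g : G) (i : Fin 2), (φ g i).totalDegree ≤ B) →
      ¬ ∃ h : G, φ h = PhiMap k) := by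
  have hd : ∀ n : ℕ, dDeg k n = 4 ^ n := by
    intro n
    obtain ⟨h0, h1, _, hdeq, _⟩ := key_invariant k n
    have hge : 4 ^ n ≤ (PhiIter k n 0).totalDegree := by
      rw [← hdeq]; exact natDegree_aeval_le _
    have : (PhiIter k n 0).totalDegree = 4 ^ n := le_antisymm h0 hge
    rw [dDeg, this]
    exact max_eq_left (this ▸ h1)
  have hub : ∀ B : ℕ, ∃ n : ℕ, B < dDeg k n := by
    intro B
    exact ⟨B, by rw [hd]; exact Nat.lt_pow_self (n := B) (by norm_num)⟩
  refine ⟨hd, hub, ?_⟩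
  intro G _ φ hmul ⟨B, hB⟩ ⟨h, hh⟩
  have hiter : ∀ n : ℕ, φ (h ^ (n + 1)) = PhiIter k (n + 1) := by
    intro n
    induction n with
    | zero => rw [pow_one, hh, PhiIter_one]
    | succ n ih =>
      have : h ^ (n + 2) = h * h ^ (n + 1) := by rw [← pow_succ']
      rw [this, hmul, hh, ih]
      rfl
  have hm : B < dDeg k (B + 1) := by
    rw [hd]
    calc B < 4 ^ B := Nat.lt_pow_self (n := B) (by norm_num)
      _ ≤ 4 ^ (B + 1) := Nat.pow_le_pow_right (by norm_num) (by omega)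
  have : dDeg k (B + 1) ≤ B := by
    rw [dDeg, ← hiter B]
    exact max_le (hB _ 0) (hB _ 1)
  omega
end

section
/- Let k be an algebraically closed field containing ℂ(x) with x transcendental over ℂ (e.g. the algebraic closure of ℂ(x)), set Q(y,z) = x²y − z² − xz³, and let Ψ be the automorphism of k² given by Ψ(y,z) = (y(1−xz) + Q²/4 + z⁴, z − (Q/2)x). Then the only fixpoint of Ψ in k² is (0,0). -/
/-- Let k be an algebraically closed field containing ℂ(x) with x
transcendental over ℂ, Q(y,z) = x²y − z² − xz³, and Ψ the automorphism of k² given by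
Ψ(y,z) = (y(1−xz) + Q²/4 + z⁴, z − (Q/2)x). Then the only fixpoint of Ψ is (0,0). -/
theorem poloni_moser_aut_unique_fixpoint (k : Type*) [Field k] [IsAlgClosed k]
    [Algebra ℂ k] (x : k) (hx : Transcendental ℂ x) :
    ∀ α β : k,
      (α * (1 - x * β) + (x ^ 2 * α - β ^ 2 - x * β ^ 3) ^ 2 / 4 + β ^ 4 = α ∧
        β - (x ^ 2 * α - β ^ 2 - x * β ^ 3) / 2 * x = β) ↔ (α = 0 ∧ β = 0) := by
  have : CharZero k := charZero_of_injective_algebraMap (algebraMap ℂ k).injective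
  have hx0 : x ≠ 0 := by
    intro h
    exact hx (h ▸ isAlgebraic_zero)
  intro α β
  constructor
  · rintro ⟨h1, h2⟩
    have hQx : (x ^ 2 * α - β ^ 2 - x * β ^ 3) * x = 0 := by linear_combination -2 * h2
    have hQ : x ^ 2 * α - β ^ 2 - x * β ^ 3 = 0 :=
      (mul_eq_zero.mp hQx).resolve_right hx0
    have hα : x ^ 2 * α = β ^ 2 + x * β ^ 3 := by linear_combination hQ
    have h1' : α * x * β = β ^ 4 := by
      linear_combination -h1 + ((x ^ 2 * α - β ^ 2 - x * β ^ 3) / 4) * hQ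
    have hb : x * β ^ 3 = 0 := by linear_combination x ^ 2 * h1' - x * β * hα
    have hβ : β = 0 :=
      pow_eq_zero_iff (n := 3) (by norm_num) |>.mp ((mul_eq_zero.mp hb).resolve_left hx0)
    refine ⟨?_, hβ⟩
    rw [hβ] at hα
    simpa [hx0] using hα
  · rintro ⟨rfl, rfl⟩
    norm_num
end
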